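/- Every C² curve x : ℝ → ℝ³ solving the Lotka–Volterra system ẋⁱ(t) = Xⁱ(x(t)) for all t satisfies the semispray equations d²xᵏ/dt² + 2Gᵏ(x(t), ẋ(t)) = 0 for k = 1, 2, 3. -/

import Mathlib

open Matrix

/-- Partial derivative of `f : ℝ³ → ℝ` with respect to the `j`-th coordinate. -/
noncomputable def pd (f : (Fin 3 → ℝ) → ℝ) (j : Fin 3) (x : Fin 3 → ℝ) : ℝ :=
  fderiv ℝ f x (Pi.single j 1)

/-- The Lotka–Volterra vector field on ℝ³. -/
noncomputable def LV (A : Fin 3 → Fin 3 → ℝ) (B : Fin 3 → ℝ) (x : Fin 3 → ℝ) : Fin 3 → ℝ :=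
  fun i => x i * (B i - ∑ j, A i j * x j)

/-- The least squares Lagrangian associated with a vector field `X`. -/
noncomputable def lsqL (X : (Fin 3 → ℝ) → (Fin 3 → ℝ)) (x y : Fin 3 → ℝ) : ℝ :=
  ∑ i, (y i - X x i) ^ 2

/-- The semispray components produced by the least squares Lagrangian of `X`. -/
noncomputable def semispray (X : (Fin 3 → ℝ) → (Fin 3 → ℝ)) (x y : Fin 3 → ℝ) (k : Fin 3) : ℝ :=
  -(1 / 2) * ((∑ j, (pd (fun u => X u k) j x - pd (fun u => X u j) k x) * y j)
    + ∑ j, pd (fun u => X u j) k x * X x j)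

/-- The Jacobian matrix `J(x) = (∂Xⁱ/∂xʲ)(x)` of a vector field `X`. -/
noncomputable def Jmat (X : (Fin 3 → ℝ) → (Fin 3 → ℝ)) (x : Fin 3 → ℝ) :
    Matrix (Fin 3) (Fin 3) ℝ :=
  Matrix.of fun i j => pd (fun u => X u i) j x

/-- The least squares Hamiltonian associated with a vector field `X`. -/
noncomputable def Ham (X : (Fin 3 → ℝ) → (Fin 3 → ℝ)) (x p : Fin 3 → ℝ) : ℝ :=
  (1 / 4) * (∑ i, (p i) ^ 2) + ∑ k, X x k * p k

/-- The Lagrangian canonical nonlinear connection matrix `N(x) = -(1/2)(J(x) - J(x)ᵗ)`. -/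
noncomputable def NL (A : Fin 3 → Fin 3 → ℝ) (B : Fin 3 → ℝ) (x : Fin 3 → ℝ) :
    Matrix (Fin 3) (Fin 3) ℝ :=
  (-(1 / 2) : ℝ) • (Jmat (LV A B) x - (Jmat (LV A B) x)ᵀ)

/-- The Lagrangian d-torsion matrices: entry `(i, j)` of `Rtor A B k x` is
`Rʲₖⁱ(x) = ∂Nʲⁱ/∂xᵏ(x) − ∂Nₖⁱ/∂xʲ(x)`. -/
noncomputable def Rtor (A : Fin 3 → Fin 3 → ℝ) (B : Fin 3 → ℝ) (k : Fin 3) (x : Fin 3 → ℝ) :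
    Matrix (Fin 3) (Fin 3) ℝ :=
  Matrix.of fun i j => pd (fun u => NL A B u i j) k x - pd (fun u => NL A B u i k) j x

/-- The Lagrangian Yang–Mills electromagnetic-like energy
`EYM(x) = (1/2)·Trace(F(x)·F(x)ᵗ)` with `F(x) = -N(x)`. -/
noncomputable def EYM (A : Fin 3 → Fin 3 → ℝ) (B : Fin 3 → ℝ) (x : Fin 3 → ℝ) : ℝ :=
  (1 / 2) * Matrix.trace ((-(NL A B x)) * (-(NL A B x))ᵀ)

/-- every C² solution of the Lotka–Volterra system satisfies the
semispray equations `d²xᵏ/dt² + 2Gᵏ(x, ẋ) = 0`. -/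
theorem stmt_1 (A : Fin 3 → Fin 3 → ℝ) (B : Fin 3 → ℝ)
    (hA : ∀ i j, 0 < A i j) (hB : ∀ i, 0 < B i)
    (x : ℝ → Fin 3 → ℝ) (hx : ContDiff ℝ 2 x)
    (hode : ∀ t : ℝ, ∀ i : Fin 3, deriv x t i = LV A B (x t) i) :
    ∀ t : ℝ, ∀ k : Fin 3,
      deriv (deriv x) t k + 2 * semispray (LV A B) (x t) (deriv x t) k = 0 := by
  intro t k
  have hdiffLV : ∀ i : Fin 3, Differentiable ℝ (fun u : Fin 3 → ℝ => LV A B u i) := by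
    intro i
    unfold LV
    fun_prop
  have hx' : HasDerivAt x (deriv x t) t := (hx.differentiable two_ne_zero t).hasDerivAt
  have hcomp : ∀ i : Fin 3, HasDerivAt (fun s => LV A B (x s) i)
      (fderiv ℝ (fun u => LV A B u i) (x t) (deriv x t)) t := fun i =>
    ((hdiffLV i (x t)).hasFDerivAt).comp_hasDerivAt t hx'
  have hdx : deriv x = fun s => LV A B (x s) := funext fun s => funext fun i => hode s i
  have key : deriv (deriv x) t k = fderiv ℝ (fun u => LV A B u k) (x t) (deriv x t) := by
    have h2 : deriv (deriv x) t = fun i => deriv (fun s => LV A B (x s) i) t := by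
      rw [hdx]; exact deriv_pi (fun i => (hcomp i).differentiableAt)
    rw [h2]; exact (hcomp k).deriv
  have hfd : fderiv ℝ (fun u => LV A B u k) (x t) (deriv x t)
      = ∑ j, deriv x t j * pd (fun u => LV A B u k) j (x t) := by
    have hv : (deriv x t) = ∑ j, Pi.single j (deriv x t j) := (Finset.univ_sum_single _).symm
    conv_lhs => rw [hv]
    rw [map_sum]
    refine Finset.sum_congr rfl fun j _ => ?_
    have h1 : (Pi.single j (deriv x t j) : Fin 3 → ℝ)
        = deriv x t j • (Pi.single j 1 : Fin 3 → ℝ) := by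
      ext i; simp [Pi.single_apply]
    rw [h1, _root_.map_smul, smul_eq_mul]
    rfl
  rw [key, hfd]
  simp only [semispray, hode t]
  rw [Fin.sum_univ_three, Fin.sum_univ_three, Fin.sum_univ_three]
  ring
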